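/- Let A^∼ be an n×n complex matrix with spectral radius ρ_1 > 0 and maximal Jordan block size k, and let A(ν), ν = 0, 1, 2, …, be n×n complex matrices such that h^∼(A(ν) − A^∼) ≤ C₁/(ν+1) for all ν and some constant C₁ > 0. Then there exists a constant B > 0 such that for all ν ≥ 1, h^∼(A(ν−1)·A(ν−2)·…·A(1)·A(0)) ≤ ρ_1^ν · exp(B·(ν^{1−1/k} + ln(eν))). -/

import Mathlib

open Matrix

/-- The operator norm on `n×n` complex matrices associated with a norm `p` on `ℂ^n`. -/
noncomputable def opNormWrt {n : ℕ} (p : (Fin n → ℂ) → ℝ)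
    (B : Matrix (Fin n) (Fin n) ℂ) : ℝ :=
  sSup {c : ℝ | ∃ x : Fin n → ℂ, p x ≤ 1 ∧ c = p (B.mulVec x)}

/-- The sup norm `h` on `ℂ^n`. -/
noncomputable def hNorm {n : ℕ} (x : Fin n → ℂ) : ℝ := ‖x‖

/-- The spectral radius: the maximum of the absolute values of the eigenvalues. -/
noncomputable def specRad {n : ℕ} (A : Matrix (Fin n) (Fin n) ℂ) : ℝ :=
  sSup {r : ℝ | ∃ μ : ℂ, A.charpoly.IsRoot μ ∧ r = ‖μ‖}

/-- `k` is the maximal Jordan block size of `A`. -/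
def IsMaxJordanSize {n : ℕ} (A : Matrix (Fin n) (Fin n) ℂ) (k : ℕ) : Prop :=
  IsLeast {j : ℕ | 0 < j ∧ ∀ μ : ℂ, A.charpoly.IsRoot μ →
    LinearMap.ker (Matrix.mulVecLin ((A - μ • 1) ^ j)) =
      LinearMap.ker (Matrix.mulVecLin ((A - μ • 1) ^ (j + 1)))} k

open Polynomial

namespace MPGB


noncomputable def T {n : ℕ} (M : Matrix (Fin n) (Fin n) ℂ) :
    (Fin n → ℂ) →L[ℂ] (Fin n → ℂ) :=
  LinearMap.toContinuousLinearMap (Matrix.mulVecLin M)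

lemma T_apply {n : ℕ} (M : Matrix (Fin n) (Fin n) ℂ) (x : Fin n → ℂ) :
    T M x = M.mulVec x := rfl

lemma opNormWrt_eq {n : ℕ} (M : Matrix (Fin n) (Fin n) ℂ) :
    opNormWrt hNorm M = ‖T M‖ := by
  rw [← ContinuousLinearMap.sSup_unitClosedBall_eq_norm (T M)]
  apply congrArg sSup
  ext c
  simp only [opNormWrt, hNorm, Set.mem_setOf_eq, Set.mem_image,
    Metric.mem_closedBall, dist_zero_right]
  constructor
  · rintro ⟨x, hx, rfl⟩; exact ⟨x, hx, rfl⟩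
  · rintro ⟨x, hx, rfl⟩; exact ⟨x, hx, rfl⟩

lemma T_mul {n : ℕ} (M N : Matrix (Fin n) (Fin n) ℂ) :
    T (M * N) = T M * T N := by
  ext x
  simp [T_apply, ContinuousLinearMap.mul_apply, Matrix.mulVec_mulVec]

lemma T_add {n : ℕ} (M N : Matrix (Fin n) (Fin n) ℂ) :
    T (M + N) = T M + T N := by
  ext x
  simp [T_apply, Matrix.add_mulVec, ContinuousLinearMap.add_apply]

lemma T_one {n : ℕ} : T (1 : Matrix (Fin n) (Fin n) ℂ) = 1 := by
  ext x
  simp [T_apply, Matrix.one_mulVec]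

lemma T_pow_apply {n : ℕ} (M : Matrix (Fin n) (Fin n) ℂ) (m : ℕ) (x : Fin n → ℂ) :
    ((T M) ^ m) x = ((Matrix.mulVecLin M) ^ m) x := by
  induction m generalizing x with
  | zero => rfl
  | succ m ih =>
      rw [pow_succ, pow_succ]
      simp only [ContinuousLinearMap.mul_apply, Module.End.mul_apply]
      rw [← ih]
      rfl



lemma rpow_sub_rpow_ge {r x y : ℝ} (hr0 : 0 ≤ r) (hr1 : r ≤ 1)
    (hx : 0 ≤ x) (hxy : x ≤ y) (hy : 0 < y) :
    r * ((y - x) / y) * y ^ r ≤ y ^ r - x ^ r := by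
  have ht0 : 0 ≤ x / y := div_nonneg hx hy.le
  have key : (x / y) ^ r ≤ r * (x / y) + (1 - r) := by
    have h := Real.geom_mean_le_arith_mean2_weighted (w₁ := r) (w₂ := 1 - r)
      (p₁ := x / y) (p₂ := 1) hr0 (by linarith) ht0 zero_le_one (by ring)
    simpa using h
  have hxr : x ^ r = (x / y) ^ r * y ^ r := by
    rw [Real.div_rpow hx hy.le]
    field_simp [(Real.rpow_pos_of_pos hy r).ne']
  have hyr : (0:ℝ) ≤ y ^ r := (Real.rpow_pos_of_pos hy r).le
  have h2 : r * ((y - x) / y) = 1 - (r * (x/y) + (1-r)) := by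
    field_simp
    ring
  rw [h2, hxr]
  nlinarith [key, hyr]

section Core

variable (k : ℕ)

noncomputable def rr : ℝ := 1 - 1/(k:ℝ)

noncomputable def Phi (t : ℕ) : ℝ := (t:ℝ) ^ rr k

noncomputable def psi (ν : ℕ) : ℝ := ∑ j ∈ Finset.range ν, Phi k (j+1) / ((j:ℝ)+1)

variable {k}

lemma kpos (hk : 1 ≤ k) : (0:ℝ) < (k:ℝ) := by
  exact_mod_cast Nat.lt_of_lt_of_le Nat.zero_lt_one hk

lemma rr_nonneg (hk : 1 ≤ k) : 0 ≤ rr k := by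
  unfold rr
  rw [sub_nonneg, div_le_one (kpos hk)]
  exact_mod_cast hk

lemma rr_le_one : rr k ≤ 1 := by
  unfold rr
  have : 0 ≤ 1/(k:ℝ) := by positivity
  linarith

lemma rr_half (hk : 2 ≤ k) : 1/2 ≤ rr k := by
  have hk0 : (2:ℝ) ≤ (k:ℝ) := by exact_mod_cast hk
  have : 1/(k:ℝ) ≤ 1/2 := one_div_le_one_div_of_le two_pos hk0
  unfold rr
  linarith

lemma Phi_nonneg (t : ℕ) : 0 ≤ Phi k t := Real.rpow_nonneg (by positivity) _

lemma Phi_pos (t : ℕ) (ht : 1 ≤ t) : 0 < Phi k t :=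
  Real.rpow_pos_of_pos (by exact_mod_cast ht) _

lemma Phi_one_le (t : ℕ) (ht : 1 ≤ t) (hk : 1 ≤ k) : 1 ≤ Phi k t :=
  Real.one_le_rpow (by exact_mod_cast ht) (rr_nonneg hk)

lemma Phi_mono (hk : 1 ≤ k) {s t : ℕ} (h : s ≤ t) : Phi k s ≤ Phi k t :=
  Real.rpow_le_rpow (by positivity) (by exact_mod_cast h) (rr_nonneg hk)

lemma Phi_diff (hk : 1 ≤ k) {s t : ℕ} (hst : s ≤ t) (ht : 1 ≤ t) :
    rr k * (((t:ℝ) - (s:ℝ)) / (t:ℝ)) * Phi k t ≤ Phi k t - Phi k s :=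
  rpow_sub_rpow_ge (rr_nonneg hk) rr_le_one (by positivity) (by exact_mod_cast hst)
    (by exact_mod_cast ht)


lemma psi_succ (ν : ℕ) : psi k (ν+1) = psi k ν + Phi k (ν+1) / ((ν:ℝ)+1) := by
  unfold psi
  rw [Finset.sum_range_succ]

lemma psi_nonneg (ν : ℕ) : 0 ≤ psi k ν := by
  unfold psi
  apply Finset.sum_nonneg
  intro j _
  have := Phi_nonneg (k := k) (j+1)
  positivity

lemma psi_le_phi (hk : 2 ≤ k) (ν : ℕ) : rr k * psi k ν ≤ Phi k ν := by
  induction ν with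
  | zero =>
      unfold psi Phi
      simp only [Finset.range_zero, Finset.sum_empty, mul_zero, Nat.cast_zero]
      rw [Real.zero_rpow (by have := rr_half hk; intro h; rw [h] at this; norm_num at this)]
  | succ ν ih =>
      rw [psi_succ, mul_add]
      have hd := Phi_diff (k := k) (by omega) (s := ν) (t := ν+1) (by omega) (by omega)
      have hcast : ((ν+1:ℕ):ℝ) - (ν:ℝ) = 1 := by push_cast; ring
      rw [hcast] at hd
      have : rr k * (Phi k (ν+1) / ((ν:ℝ)+1)) ≤ Phi k (ν+1) - Phi k ν := by
        have h2 : ((ν+1:ℕ):ℝ) = (ν:ℝ)+1 := by push_cast; ring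
        calc rr k * (Phi k (ν+1) / ((ν:ℝ)+1))
            = rr k * (1 / ((ν+1:ℕ):ℝ)) * Phi k (ν+1) := by rw [h2]; ring
          _ ≤ Phi k (ν+1) - Phi k ν := hd
      linarith

lemma psi_le_log (hk : k = 1) (ν : ℕ) (hν : 1 ≤ ν) : psi k ν ≤ 1 + Real.log ν := by
  subst hk
  have hPhi : ∀ t : ℕ, Phi 1 t = 1 := by
    intro t
    unfold Phi rr
    norm_num
  induction ν with
  | zero => omega
  | succ ν ih =>
      rcases Nat.eq_or_lt_of_le hν with h | h
      · simp only [← h]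
        rw [psi_succ]
        unfold psi
        simp [hPhi]
      · have hν1 : 1 ≤ ν := by omega
        have hνR : (0:ℝ) < ν := by exact_mod_cast hν1
        rw [psi_succ, hPhi]
        have hlog : 1 / ((ν:ℝ)+1) ≤ Real.log ((ν:ℝ)+1) - Real.log ν := by
          have h1 : Real.log ((ν:ℝ)/((ν:ℝ)+1)) ≤ (ν:ℝ)/((ν:ℝ)+1) - 1 :=
            Real.log_le_sub_one_of_pos (by positivity)
          have h2 : Real.log ((ν:ℝ)/((ν:ℝ)+1)) = Real.log ν - Real.log ((ν:ℝ)+1) :=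
            Real.log_div hνR.ne' (by positivity)
          have h3 : (ν:ℝ)/((ν:ℝ)+1) - 1 = -(1/((ν:ℝ)+1)) := by field_simp; ring
          rw [h2, h3] at h1
          linarith
        have hcast : ((ν+1:ℕ):ℝ) = (ν:ℝ)+1 := by push_cast; ring
        have := ih hν1
        rw [hcast]
        linarith

lemma phi_base (hk : 1 ≤ k) (m : ℕ) :
    ((m:ℝ)+1) ^ ((k:ℝ)-1) ≤ Real.exp (2*(k:ℝ) * Phi k (m+1)) := by
  have hx1 : (1:ℝ) ≤ (m:ℝ)+1 := by
    have : (0:ℝ) ≤ (m:ℝ) := Nat.cast_nonneg m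
    linarith
  have hx0 : (0:ℝ) < (m:ℝ)+1 := by positivity
  have hPhiEq : Phi k (m+1) = ((m:ℝ)+1) ^ (rr k) := by
    unfold Phi; push_cast; ring_nf
  have hPhi0 : 0 ≤ Phi k (m+1) := Phi_nonneg _
  rcases Nat.eq_or_lt_of_le hk with h | h
  · have : ((k:ℝ)-1) = 0 := by rw [← h]; norm_num
    rw [this, Real.rpow_zero]
    apply Real.one_le_exp
    positivity
  · have hk2 : 2 ≤ k := h
    have hkR : (2:ℝ) ≤ (k:ℝ) := by exact_mod_cast hk2
    have hlog : Real.log ((m:ℝ)+1) ≤ 2 * ((m:ℝ)+1) ^ ((1:ℝ)/2) := by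
      have hs0 : (0:ℝ) < ((m:ℝ)+1) ^ ((1:ℝ)/2) := Real.rpow_pos_of_pos hx0 _
      have h1 : Real.log (((m:ℝ)+1) ^ ((1:ℝ)/2)) = ((1:ℝ)/2) * Real.log ((m:ℝ)+1) :=
        Real.log_rpow hx0 _
      have h2 : Real.log (((m:ℝ)+1) ^ ((1:ℝ)/2)) ≤ ((m:ℝ)+1) ^ ((1:ℝ)/2) - 1 :=
        Real.log_le_sub_one_of_pos hs0
      rw [h1] at h2
      linarith
    have hhalf : ((m:ℝ)+1) ^ ((1:ℝ)/2) ≤ ((m:ℝ)+1) ^ (rr k) :=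
      Real.rpow_le_rpow_of_exponent_le hx1 (by have := rr_half hk2; linarith)
    have hmain : ((k:ℝ)-1) * Real.log ((m:ℝ)+1) ≤ 2*(k:ℝ) * Phi k (m+1) := by
      rw [hPhiEq]
      have hk1' : (0:ℝ) ≤ (k:ℝ)-1 := by linarith
      have hlog0 : 0 ≤ Real.log ((m:ℝ)+1) := Real.log_nonneg hx1
      have hr0 : (0:ℝ) ≤ ((m:ℝ)+1) ^ (rr k) := Real.rpow_nonneg hx0.le _
      calc ((k:ℝ)-1) * Real.log ((m:ℝ)+1) ≤ ((k:ℝ)-1) * (2 * ((m:ℝ)+1) ^ (rr k)) := by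
            apply mul_le_mul_of_nonneg_left _ hk1'
            calc Real.log ((m:ℝ)+1) ≤ 2 * ((m:ℝ)+1) ^ ((1:ℝ)/2) := hlog
              _ ≤ 2 * ((m:ℝ)+1) ^ (rr k) := by linarith
        _ ≤ 2*(k:ℝ) * ((m:ℝ)+1) ^ (rr k) := by nlinarith
    calc ((m:ℝ)+1) ^ ((k:ℝ)-1) = Real.exp (Real.log ((m:ℝ)+1) * ((k:ℝ)-1)) := by
          rw [Real.rpow_def_of_pos hx0]
      _ ≤ Real.exp (2*(k:ℝ) * Phi k (m+1)) := by
          apply Real.exp_le_exp.mpr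
          rw [mul_comm]
          exact hmain


lemma Phi_def (t : ℕ) : Phi k t = (t:ℝ) ^ rr k := rfl

lemma ratio_mono {x y ρr : ℝ} (hρ0 : 0 ≤ ρr) (hρ1 : ρr ≤ 1) (hx : 0 < x) (hxy : x ≤ y) :
    y ^ ρr / y ≤ x ^ ρr / x := by
  have hy : 0 < y := lt_of_lt_of_le hx hxy
  rw [div_le_div_iff₀ hy hx]
  have h1 : (x/y) ^ (1:ℝ) ≤ (x/y) ^ ρr :=
    Real.rpow_le_rpow_of_exponent_ge (by positivity) (by rw [div_le_one hy]; exact hxy) hρ1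
  rw [Real.rpow_one, Real.div_rpow hx.le hy.le] at h1
  rw [div_le_div_iff₀ hy (Real.rpow_pos_of_pos hy _)] at h1
  linarith

noncomputable def Cst (k : ℕ) : ℝ := 2 * ((2*k).factorial : ℝ)

lemma Cst_ge_one : 1 ≤ Cst k := by
  unfold Cst
  have : 1 ≤ ((2*k).factorial : ℝ) := by exact_mod_cast (Nat.factorial_pos (2*k))
  linarith

set_option maxHeartbeats 2000000 in
lemma star (hk : 1 ≤ k) (N m : ℕ) (hN : 1 ≤ N) :
    ((m:ℝ)+1) ^ ((k:ℝ)-1) ≤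
      Cst k * Phi k N * Real.exp (2*(k:ℝ) * (Phi k (N+m+1) - Phi k N)) := by
  have hΔ0 : 0 ≤ Phi k (N+m+1) - Phi k N := by
    have := Phi_mono (k := k) hk (show N ≤ N+m+1 by omega)
    linarith
  have hexp1 : 1 ≤ Real.exp (2*(k:ℝ) * (Phi k (N+m+1) - Phi k N)) :=
    Real.one_le_exp (by positivity)
  have hPhiN1 : 1 ≤ Phi k N := Phi_one_le N hN hk
  have hCst1 : 1 ≤ Cst k := Cst_ge_one
  set Δ : ℝ := Phi k (N+m+1) - Phi k N with hΔdef
  rcases Nat.eq_or_lt_of_le hk with h | hk2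
  · -- k = 1
    have : ((k:ℝ)-1) = 0 := by rw [← h]; norm_num
    rw [this, Real.rpow_zero]
    have h1 : 1 ≤ Cst k * Phi k N := by nlinarith
    calc (1:ℝ) = 1 * 1 := by norm_num
      _ ≤ Cst k * Phi k N * Real.exp (2*(k:ℝ) * Δ) :=
          mul_le_mul h1 hexp1 zero_le_one (by nlinarith)
  · -- 2 ≤ k
    have hkR : (2:ℝ) ≤ (k:ℝ) := by exact_mod_cast hk2
    have hrhalf : 1/2 ≤ rr k := rr_half hk2
    have hr1 : rr k ≤ 1 := rr_le_one
    have hr0 : 0 ≤ rr k := by linarith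
    set j : ℕ := k - 1 with hjdef
    have hjR : ((j:ℕ):ℝ) = (k:ℝ)-1 := by
      have hkk : k = j + 1 := by omega
      rw [hkk]
      push_cast
      ring
    have hconv : ((m:ℝ)+1) ^ ((k:ℝ)-1) = ((m:ℝ)+1) ^ (j:ℕ) := by
      rw [← Real.rpow_natCast ((m:ℝ)+1) j, hjR]
    rw [hconv]
    set X : ℝ := ((m:ℝ)+1) ^ (j:ℕ) with hXdef
    have hX0 : 0 ≤ X := by positivity
    set sR : ℝ := ((N+m+1 : ℕ):ℝ) with hsRdef
    have hsRpos : (0:ℝ) < sR := by rw [hsRdef]; exact_mod_cast Nat.succ_pos _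
    have hsRcast : sR = (N:ℝ) + (m:ℝ) + 1 := by rw [hsRdef]; push_cast; ring
    have hNpos : (0:ℝ) < (N:ℝ) := by exact_mod_cast hN
    have hm1 : (0:ℝ) < (m:ℝ)+1 := by positivity
    -- concavity lower bound for Δ
    have hd := Phi_diff (k := k) hk (show N ≤ N+m+1 by omega) (show 1 ≤ N+m+1 by omega)
    have hdcast : ((N+m+1:ℕ):ℝ) - (N:ℝ) = (m:ℝ)+1 := by push_cast; ring
    rw [hdcast] at hd
    have hΔlow : rr k * ((m:ℝ)+1) * (sR ^ (rr k) / sR) ≤ Δ := by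
      have heq : rr k * (((m:ℝ)+1) / sR) * Phi k (N+m+1)
          = rr k * ((m:ℝ)+1) * (sR ^ (rr k) / sR) := by
        rw [Phi_def]; rw [← hsRdef]; ring
      rw [hΔdef, ← heq]
      exact hd
    -- case split on m vs N
    rcases le_or_gt (m+1) N with hc | hc
    · -- small m case
      have hy : sR ≤ 2*(N:ℝ) := by
        rw [hsRcast]
        have : (m:ℝ)+1 ≤ (N:ℝ) := by exact_mod_cast hc
        linarith
      have hrat : (2*(N:ℝ)) ^ (rr k) / (2*(N:ℝ)) ≤ sR ^ (rr k) / sR :=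
        ratio_mono hr0 hr1 hsRpos hy
      set W1 : ℝ := (2*(N:ℝ)) ^ (rr k) / (2*(N:ℝ)) with hW1def
      have hW1pos : 0 < W1 := by
        rw [hW1def]
        positivity
      set t : ℝ := (k:ℝ) * ((m:ℝ)+1) * W1 with htdef
      have ht0 : 0 ≤ t := by positivity
      have htΔ : t ≤ 2*(k:ℝ)*Δ := by
        have h1 : rr k * ((m:ℝ)+1) * W1 ≤ rr k * ((m:ℝ)+1) * (sR ^ (rr k)/sR) := by
          apply mul_le_mul_of_nonneg_left hrat (by positivity)
        have h2 : rr k * ((m:ℝ)+1) * W1 ≤ Δ := le_trans h1 hΔlow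
        nlinarith [hW1pos.le, hm1.le]
      have hexpt : t ^ j ≤ (j.factorial : ℝ) * Real.exp (2*(k:ℝ)*Δ) := by
        have h1 := Real.pow_div_factorial_le_exp t ht0 j
        have h2 : Real.exp t ≤ Real.exp (2*(k:ℝ)*Δ) := Real.exp_le_exp.mpr htΔ
        have hfp : (0:ℝ) < (j.factorial : ℝ) := by exact_mod_cast j.factorial_pos
        rw [div_le_iff₀ hfp] at h1
        calc t^j ≤ Real.exp t * (j.factorial:ℝ) := h1
          _ ≤ Real.exp (2*(k:ℝ)*Δ) * (j.factorial:ℝ) := by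
              apply mul_le_mul_of_nonneg_right h2 hfp.le
          _ = (j.factorial : ℝ) * Real.exp (2*(k:ℝ)*Δ) := by ring
      -- t^j = k^j * X * W1^j
      have htj : t ^ j = (k:ℝ)^j * X * W1^j := by
        rw [htdef, hXdef, mul_pow, mul_pow]
      have hkj : (1:ℝ) ≤ (k:ℝ)^j := one_le_pow₀ (by linarith)
      -- Phi k N * W1^j = (1/2)^rr ≥ 1/2
      have hPW : 1/2 ≤ Phi k N * W1 ^ j := by
        have hy0 : (0:ℝ) < 2*(N:ℝ) := by linarith
        have e1 : ((2*(N:ℝ)) ^ (rr k)) ^ (j:ℕ) = (2*(N:ℝ)) ^ (rr k * (j:ℝ)) := by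
          rw [← Real.rpow_natCast ((2*(N:ℝ)) ^ (rr k)) j, ← Real.rpow_mul hy0.le]
        have e2 : (2*(N:ℝ)) ^ (j:ℕ) = (2*(N:ℝ)) ^ ((j:ℝ)) := by
          rw [← Real.rpow_natCast]
        have e3 : W1 ^ j = (2*(N:ℝ)) ^ (rr k * (j:ℝ) - (j:ℝ)) := by
          rw [hW1def, div_pow, e1]
          conv_lhs => rw [show ((2*(N:ℝ)))^(j:ℕ) = (2*(N:ℝ)) ^ ((j:ℝ)) from e2]
          rw [← Real.rpow_sub hy0]
        have hexpid : rr k * (j:ℝ) - (j:ℝ) = -(rr k) := by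
          rw [hjR]
          unfold rr
          have hk0 : (k:ℝ) ≠ 0 := by linarith
          field_simp
          ring
        rw [e3, hexpid, Real.rpow_neg hy0.le]
        have e4 : Phi k N * ((2*(N:ℝ)) ^ (rr k))⁻¹ = ((N:ℝ)/(2*(N:ℝ))) ^ (rr k) := by
          rw [Real.div_rpow hNpos.le hy0.le, Phi_def]
          ring
        rw [e4]
        have e5 : (N:ℝ)/(2*(N:ℝ)) = 1/2 := by
          field_simp
        rw [e5]
        calc (1/2 : ℝ) = (1/2 : ℝ) ^ (1:ℝ) := by rw [Real.rpow_one]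
          _ ≤ (1/2 : ℝ) ^ (rr k) := Real.rpow_le_rpow_of_exponent_ge (by norm_num) (by norm_num) hr1
      have hfact : 2 * (j.factorial : ℝ) ≤ Cst k := by
        unfold Cst
        have : j.factorial ≤ (2*k).factorial := Nat.factorial_le (by omega)
        have h' : (j.factorial : ℝ) ≤ ((2*k).factorial : ℝ) := by exact_mod_cast this
        linarith
      -- assemble
      have hW1j : (0:ℝ) ≤ W1 ^ j := by positivity
      have hPhiN0 : (0:ℝ) ≤ Phi k N := by linarith
      have hexp0 : (0:ℝ) < Real.exp (2*(k:ℝ)*Δ) := Real.exp_pos _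
      have s1 : (1:ℝ) ≤ 2*(Phi k N * W1^j) := by linarith
      have s4 : X*W1^j ≤ (k:ℝ)^j * X * W1^j := by
        have := le_mul_of_one_le_left (mul_nonneg hX0 hW1j) hkj
        calc X*W1^j ≤ (k:ℝ)^j * (X * W1^j) := this
          _ = (k:ℝ)^j * X * W1^j := by ring
      calc X ≤ X * (2*(Phi k N * W1^j)) := le_mul_of_one_le_right hX0 s1
        _ = 2*Phi k N*(X*W1^j) := by ring
        _ ≤ 2*Phi k N*((k:ℝ)^j * X * W1^j) :=
            mul_le_mul_of_nonneg_left s4 (by positivity)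
        _ = 2*Phi k N*(t^j) := by rw [htj]
        _ ≤ 2*Phi k N*((j.factorial : ℝ) * Real.exp (2*(k:ℝ)*Δ)) :=
            mul_le_mul_of_nonneg_left hexpt (by positivity)
        _ = (2*(j.factorial : ℝ)) * (Phi k N * Real.exp (2*(k:ℝ)*Δ)) := by ring
        _ ≤ Cst k * (Phi k N * Real.exp (2*(k:ℝ)*Δ)) :=
            mul_le_mul_of_nonneg_right hfact (by positivity)
        _ = Cst k * Phi k N * Real.exp (2*(k:ℝ)*Δ) := by ring
    · -- large m case
      have hy : sR ≤ 2*((m:ℝ)+1) := by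
        rw [hsRcast]
        have : (N:ℝ) ≤ (m:ℝ)+1 := by
          have : N ≤ m+1 := by omega
          exact_mod_cast this
        linarith
      have hrat : (2*((m:ℝ)+1)) ^ (rr k) / (2*((m:ℝ)+1)) ≤ sR ^ (rr k) / sR :=
        ratio_mono hr0 hr1 hsRpos hy
      have hm1' : (1:ℝ) ≤ (m:ℝ)+1 := by
        have : (0:ℝ) ≤ (m:ℝ) := Nat.cast_nonneg m
        linarith
      have hΔlow2 : (1/4) * ((m:ℝ)+1) ^ ((1:ℝ)/2) ≤ Δ := by
        have h1 : rr k * ((m:ℝ)+1) * ((2*((m:ℝ)+1)) ^ (rr k) / (2*((m:ℝ)+1))) ≤ Δ := by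
          have := mul_le_mul_of_nonneg_left hrat
            (show (0:ℝ) ≤ rr k * ((m:ℝ)+1) by positivity)
          calc rr k * ((m:ℝ)+1) * ((2*((m:ℝ)+1)) ^ (rr k) / (2*((m:ℝ)+1)))
              ≤ rr k * ((m:ℝ)+1) * (sR ^ (rr k) / sR) := this
            _ ≤ Δ := hΔlow
        have h2 : rr k * ((m:ℝ)+1) * ((2*((m:ℝ)+1)) ^ (rr k) / (2*((m:ℝ)+1)))
            = (rr k / 2) * (2*((m:ℝ)+1)) ^ (rr k) := by
          field_simp
        have h3 : ((m:ℝ)+1) ^ ((1:ℝ)/2) ≤ (2*((m:ℝ)+1)) ^ (rr k) := by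
          calc ((m:ℝ)+1) ^ ((1:ℝ)/2) ≤ ((m:ℝ)+1) ^ (rr k) :=
                Real.rpow_le_rpow_of_exponent_le hm1' (by linarith)
            _ ≤ (2*((m:ℝ)+1)) ^ (rr k) :=
                Real.rpow_le_rpow (by positivity) (by linarith) hr0
        have h4 : (0:ℝ) ≤ ((m:ℝ)+1) ^ ((1:ℝ)/2) := by positivity
        have h5 : (rr k / 2) * (2*((m:ℝ)+1)) ^ (rr k) ≤ Δ := by
          linarith [h1, h2.le, h2.ge]
        have h7 : (0:ℝ) ≤ (2*((m:ℝ)+1)) ^ (rr k) := by positivity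
        have h6 : (1/4) * ((m:ℝ)+1) ^ ((1:ℝ)/2) ≤ (rr k / 2) * (2*((m:ℝ)+1)) ^ (rr k) := by
          calc (1/4) * ((m:ℝ)+1) ^ ((1:ℝ)/2) ≤ (1/4) * (2*((m:ℝ)+1)) ^ (rr k) := by
                linarith
            _ ≤ (rr k / 2) * (2*((m:ℝ)+1)) ^ (rr k) :=
                mul_le_mul_of_nonneg_right (by linarith) h7
        linarith
      set t : ℝ := ((k:ℝ)/2) * ((m:ℝ)+1) ^ ((1:ℝ)/2) with htdef
      have ht0 : 0 ≤ t := by positivity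
      have htΔ : t ≤ 2*(k:ℝ)*Δ := by
        have h4 : (0:ℝ) ≤ ((m:ℝ)+1) ^ ((1:ℝ)/2) := by positivity
        have hmul := mul_le_mul_of_nonneg_left hΔlow2 (show (0:ℝ) ≤ 2*(k:ℝ) by linarith)
        rw [htdef]
        nlinarith
      have hexpt : t ^ (2*j) ≤ ((2*j).factorial : ℝ) * Real.exp (2*(k:ℝ)*Δ) := by
        have h1 := Real.pow_div_factorial_le_exp t ht0 (2*j)
        have h2 : Real.exp t ≤ Real.exp (2*(k:ℝ)*Δ) := Real.exp_le_exp.mpr htΔ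
        have hfp : (0:ℝ) < ((2*j).factorial : ℝ) := by exact_mod_cast (2*j).factorial_pos
        rw [div_le_iff₀ hfp] at h1
        calc t^(2*j) ≤ Real.exp t * ((2*j).factorial:ℝ) := h1
          _ ≤ Real.exp (2*(k:ℝ)*Δ) * ((2*j).factorial:ℝ) := by
              apply mul_le_mul_of_nonneg_right h2 hfp.le
          _ = ((2*j).factorial : ℝ) * Real.exp (2*(k:ℝ)*Δ) := by ring
      have htX : X ≤ t ^ (2*j) := by
        have e1 : (((m:ℝ)+1) ^ ((1:ℝ)/2)) ^ (2*j : ℕ) = ((m:ℝ)+1) ^ (j:ℕ) := by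
          rw [← Real.rpow_natCast (((m:ℝ)+1) ^ ((1:ℝ)/2)) (2*j),
            ← Real.rpow_mul (by positivity : (0:ℝ) ≤ (m:ℝ)+1),
            ← Real.rpow_natCast ((m:ℝ)+1) j]
          congr 1
          push_cast
          ring
        have e2 : t ^ (2*j) = ((k:ℝ)/2)^(2*j) * (((m:ℝ)+1) ^ ((1:ℝ)/2)) ^ (2*j : ℕ) := by
          rw [htdef, mul_pow]
        have hk21 : (1:ℝ) ≤ ((k:ℝ)/2)^(2*j) := one_le_pow₀ (by linarith)
        rw [e2, e1, hXdef]
        nlinarith [pow_nonneg (show (0:ℝ) ≤ (m:ℝ)+1 by positivity) j]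
      have hfact : ((2*j).factorial : ℝ) ≤ Cst k := by
        unfold Cst
        have : (2*j).factorial ≤ (2*k).factorial := Nat.factorial_le (by omega)
        have h' : ((2*j).factorial : ℝ) ≤ ((2*k).factorial : ℝ) := by exact_mod_cast this
        linarith
      have hexp0 : (0:ℝ) < Real.exp (2*(k:ℝ)*Δ) := Real.exp_pos _
      calc X ≤ t ^ (2*j) := htX
        _ ≤ ((2*j).factorial : ℝ) * Real.exp (2*(k:ℝ)*Δ) := hexpt
        _ ≤ Cst k * Real.exp (2*(k:ℝ)*Δ) := mul_le_mul_of_nonneg_right hfact hexp0.le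
        _ ≤ Cst k * Phi k N * Real.exp (2*(k:ℝ)*Δ) := by
            nlinarith [mul_pos (lt_of_lt_of_le zero_lt_one hCst1) hexp0, hPhiN1]


set_option maxHeartbeats 2000000 in
lemma core {A : Type*} [NormedRing A] {k : ℕ} (hk : 1 ≤ k) {ρ C1 C2 : ℝ}
    (hρ : 0 < ρ) (hC1 : 0 < C1) (hC2 : 1 ≤ C2)
    (a : A) (E : ℕ → A)
    (hpow : ∀ m : ℕ, ‖a ^ m‖ ≤ C2 * ((m:ℝ)+1) ^ ((k:ℝ)-1) * ρ ^ m)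
    (hE : ∀ j : ℕ, ‖E j‖ ≤ C1 / ((j:ℝ)+1))
    (p : ℕ → A) (hp0 : p 0 = 1) (hps : ∀ ν, p (ν+1) = (a + E ν) * p ν) :
    ∃ B : ℝ, 0 < B ∧ ∀ ν : ℕ, 1 ≤ ν →
      ‖p ν‖ ≤ ρ ^ ν * Real.exp (B * ((ν:ℝ) ^ (rr k) + Real.log (Real.exp 1 * ν))) := by
  classical
  set c : ℝ := 2*(k:ℝ) with hcdef
  have hkR : (1:ℝ) ≤ (k:ℝ) := by exact_mod_cast hk
  have hc0 : 0 < c := by rw [hcdef]; linarith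
  clear_value c
  set c7 : ℝ := C1*C2*Cst k/ρ with hc7def
  have hCst1 : 1 ≤ Cst k := Cst_ge_one
  have hc70 : 0 < c7 := by
    rw [hc7def]
    have h1 : (0:ℝ) < Cst k := by linarith
    have h2 : (0:ℝ) < C2 := by linarith
    positivity
  clear_value c7
  have hrr0 : 0 ≤ rr k := rr_nonneg hk
  -- main induction
  have claim : ∀ ν m : ℕ,
      ‖a ^ m * p ν‖ ≤ C2 * ρ^(ν+m) * Real.exp (c * Phi k (ν+m+1) + c7 * psi k ν) := by
    intro ν
    induction ν with
    | zero =>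
        intro m
        rw [hp0, mul_one]
        unfold psi
        simp only [Finset.range_zero, Finset.sum_empty, mul_zero, add_zero, Nat.zero_add]
        calc ‖a ^ m‖ ≤ C2 * ((m:ℝ)+1) ^ ((k:ℝ)-1) * ρ ^ m := hpow m
          _ ≤ C2 * Real.exp (c * Phi k (m+1)) * ρ ^ m := by
              apply mul_le_mul_of_nonneg_right _ (by positivity)
              apply mul_le_mul_of_nonneg_left _ (by linarith)
              rw [hcdef]
              exact phi_base hk m
          _ = C2 * ρ ^ m * Real.exp (c * Phi k (m+1)) := by ring
    | succ ν ih =>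
        intro m
        have hsplit : a ^ m * p (ν+1) = a^(m+1) * p ν + (a^m * E ν) * p ν := by
          rw [hps ν, ← mul_assoc, mul_add, add_mul, ← pow_succ]
        have hb1 : ‖a^(m+1) * p ν‖
            ≤ C2 * ρ^(ν+m+1) * Real.exp (c * Phi k (ν+m+2) + c7 * psi k ν) := by
          have h := ih (m+1)
          have e1 : ν+(m+1) = ν+m+1 := by omega
          have e2 : ν+m+1+1 = ν+m+2 := by omega
          rw [e1, e2] at h
          exact h
        have hpν : ‖p ν‖ ≤ C2 * ρ^ν * Real.exp (c * Phi k (ν+1) + c7 * psi k ν) := by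
          have h := ih 0
          rw [pow_zero, one_mul, Nat.add_zero] at h
          exact h
        have hb2 : ‖(a^m * E ν) * p ν‖
            ≤ (C2 * ((m:ℝ)+1) ^ ((k:ℝ)-1) * ρ ^ m) * (C1 / ((ν:ℝ)+1))
              * (C2 * ρ^ν * Real.exp (c * Phi k (ν+1) + c7 * psi k ν)) := by
          have h3 : ‖a^m * E ν‖ ≤ (C2 * ((m:ℝ)+1) ^ ((k:ℝ)-1) * ρ ^ m) * (C1 / ((ν:ℝ)+1)) :=
            calc ‖a^m * E ν‖ ≤ ‖a^m‖ * ‖E ν‖ := norm_mul_le _ _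
              _ ≤ (C2 * ((m:ℝ)+1) ^ ((k:ℝ)-1) * ρ ^ m) * (C1 / ((ν:ℝ)+1)) :=
                  mul_le_mul (hpow m) (hE ν) (norm_nonneg _) (by positivity)
          calc ‖(a^m * E ν) * p ν‖ ≤ ‖a^m * E ν‖ * ‖p ν‖ := norm_mul_le _ _
            _ ≤ (C2 * ((m:ℝ)+1) ^ ((k:ℝ)-1) * ρ ^ m) * (C1 / ((ν:ℝ)+1))
                * (C2 * ρ^ν * Real.exp (c * Phi k (ν+1) + c7 * psi k ν)) :=
              mul_le_mul h3 hpν (norm_nonneg _) (by positivity)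
        -- multiplied form of the star inequality with N = ν+1
        have hstar2 : ((m:ℝ)+1) ^ ((k:ℝ)-1) * Real.exp (c * Phi k (ν+1))
            ≤ Cst k * Phi k (ν+1) * Real.exp (c * Phi k (ν+m+2)) := by
          have hstar := star hk (ν+1) m (by omega)
          have hse : (ν+1)+m+1 = ν+m+2 := by omega
          rw [hse] at hstar
          have h := mul_le_mul_of_nonneg_right hstar (Real.exp_pos (c * Phi k (ν+1))).le
          calc ((m:ℝ)+1) ^ ((k:ℝ)-1) * Real.exp (c * Phi k (ν+1))
              ≤ Cst k * Phi k (ν+1) * Real.exp (2*(k:ℝ) * (Phi k (ν+m+2) - Phi k (ν+1)))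
                * Real.exp (c * Phi k (ν+1)) := h
            _ = Cst k * Phi k (ν+1) * Real.exp (c * Phi k (ν+m+2)) := by
                rw [mul_assoc, ← Real.exp_add, ← hcdef]
                congr 2
                ring
        have hb2' : ‖(a^m * E ν) * p ν‖
            ≤ (c7 * Phi k (ν+1) / ((ν:ℝ)+1))
              * (C2 * ρ^(ν+m+1) * Real.exp (c * Phi k (ν+m+2) + c7 * psi k ν)) := by
          apply le_trans hb2
          have hfac : (0:ℝ) ≤ C1 * C2 * C2 * ρ^(ν+m) * Real.exp (c7 * psi k ν)
              / ((ν:ℝ)+1) := by positivity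
          have hmul := mul_le_mul_of_nonneg_left hstar2 hfac
          calc (C2 * ((m:ℝ)+1) ^ ((k:ℝ)-1) * ρ ^ m) * (C1 / ((ν:ℝ)+1))
                * (C2 * ρ^ν * Real.exp (c * Phi k (ν+1) + c7 * psi k ν))
              = (C1 * C2 * C2 * ρ^(ν+m) * Real.exp (c7 * psi k ν) / ((ν:ℝ)+1))
                * (((m:ℝ)+1) ^ ((k:ℝ)-1) * Real.exp (c * Phi k (ν+1))) := by
                rw [Real.exp_add, pow_add]
                ring
            _ ≤ (C1 * C2 * C2 * ρ^(ν+m) * Real.exp (c7 * psi k ν) / ((ν:ℝ)+1))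
                * (Cst k * Phi k (ν+1) * Real.exp (c * Phi k (ν+m+2))) := hmul
            _ = (c7 * Phi k (ν+1) / ((ν:ℝ)+1))
                * (C2 * ρ^(ν+m+1) * Real.exp (c * Phi k (ν+m+2) + c7 * psi k ν)) := by
                rw [hc7def, Real.exp_add, pow_succ, pow_add]
                have hν1 : ((ν:ℝ)+1) ≠ 0 := by positivity
                field_simp
        -- combine
        have hΦν10 : 0 ≤ Phi k (ν+1) := Phi_nonneg _
        have hF0 : (0:ℝ) ≤ C2 * ρ^(ν+m+1) * Real.exp (c * Phi k (ν+m+2) + c7 * psi k ν) := by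
          positivity
        have hsum : ‖a ^ m * p (ν+1)‖
            ≤ (1 + c7 * Phi k (ν+1) / ((ν:ℝ)+1))
              * (C2 * ρ^(ν+m+1) * Real.exp (c * Phi k (ν+m+2) + c7 * psi k ν)) := by
          rw [hsplit]
          calc ‖a^(m+1) * p ν + (a^m * E ν) * p ν‖
              ≤ ‖a^(m+1) * p ν‖ + ‖(a^m * E ν) * p ν‖ := norm_add_le _ _
            _ ≤ (1 + c7 * Phi k (ν+1) / ((ν:ℝ)+1))
                * (C2 * ρ^(ν+m+1) * Real.exp (c * Phi k (ν+m+2) + c7 * psi k ν)) := by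
                rw [add_mul, one_mul]
                exact add_le_add hb1 hb2'
        have hexp : (1 + c7 * Phi k (ν+1) / ((ν:ℝ)+1))
            ≤ Real.exp (c7 * Phi k (ν+1) / ((ν:ℝ)+1)) := by
          have := Real.add_one_le_exp (c7 * Phi k (ν+1) / ((ν:ℝ)+1))
          linarith
        have e1 : (ν+1)+m = ν+m+1 := by omega
        have e2 : ν+m+1+1 = ν+m+2 := by omega
        rw [e1, e2]
        calc ‖a ^ m * p (ν+1)‖
            ≤ (1 + c7 * Phi k (ν+1) / ((ν:ℝ)+1))
              * (C2 * ρ^(ν+m+1) * Real.exp (c * Phi k (ν+m+2) + c7 * psi k ν)) := hsum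
          _ ≤ Real.exp (c7 * Phi k (ν+1) / ((ν:ℝ)+1))
              * (C2 * ρ^(ν+m+1) * Real.exp (c * Phi k (ν+m+2) + c7 * psi k ν)) :=
              mul_le_mul_of_nonneg_right hexp hF0
          _ = C2 * ρ^(ν+m+1) * Real.exp (c * Phi k (ν+m+2) + c7 * psi k (ν+1)) := by
              rw [psi_succ, mul_add c7 (psi k ν) (Phi k (ν+1)/((ν:ℝ)+1)),
                Real.exp_add, Real.exp_add, Real.exp_add]
              ring
  -- conclusion
  set B : ℝ := Real.log C2 + 2*c + c7 * (1/rr k + 1) + 1 with hBdef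
  clear_value B
  have hlogC2 : 0 ≤ Real.log C2 := Real.log_nonneg hC2
  have hinvrr : 0 ≤ 1/rr k := div_nonneg zero_le_one hrr0
  refine ⟨B, by rw [hBdef]; nlinarith, ?_⟩
  intro ν hν
  have h := claim ν 0
  rw [pow_zero, one_mul, Nat.add_zero] at h
  have hν1R : (1:ℝ) ≤ (ν:ℝ) := by exact_mod_cast hν
  have hL : Real.log (Real.exp 1 * ν) = 1 + Real.log ν := by
    rw [Real.log_mul (Real.exp_ne_zero 1) (by linarith), Real.log_exp]
  have hlogν : 0 ≤ Real.log ν := Real.log_nonneg hν1R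
  have hΦν1 : 1 ≤ Phi k ν := Phi_one_le ν hν hk
  have hΦsucc : Phi k (ν+1) ≤ 2 * Phi k ν := by
    have h2r : (2:ℝ)^(rr k) ≤ 2^(1:ℝ) :=
      Real.rpow_le_rpow_of_exponent_le one_le_two rr_le_one
    rw [Real.rpow_one] at h2r
    have hν0 : (0:ℝ) ≤ (ν:ℝ) := by linarith
    have hνr0 : (0:ℝ) ≤ (ν:ℝ)^(rr k) := Real.rpow_nonneg hν0 _
    calc Phi k (ν+1) = ((ν+1:ℕ):ℝ)^(rr k) := rfl
      _ ≤ (2*(ν:ℝ))^(rr k) :=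
          Real.rpow_le_rpow (by positivity) (by push_cast; linarith) hrr0
      _ = 2^(rr k) * (ν:ℝ)^(rr k) := Real.mul_rpow (by norm_num) hν0
      _ ≤ 2 * Phi k ν := by
          have hPd : Phi k ν = (ν:ℝ)^(rr k) := rfl
          nlinarith
  have hψν : Real.log C2 + c * Phi k (ν+1) + c7 * psi k ν
      ≤ B * (Phi k ν + Real.log (Real.exp 1 * ν)) := by
    rw [hL]
    have hcΦ : c * Phi k (ν+1) ≤ 2*c * Phi k ν := by
      have := mul_le_mul_of_nonneg_left hΦsucc hc0.le
      nlinarith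
    rcases Nat.eq_or_lt_of_le hk with hk1 | hk2
    · -- k = 1
      have hrr : rr k = 0 := by
        rw [← hk1]
        unfold rr
        norm_num
      have hψ := psi_le_log hk1.symm ν hν
      have hΦν : Phi k ν = 1 := by
        rw [Phi_def, hrr, Real.rpow_zero]
      have hΦν' : Phi k (ν+1) = 1 := by
        rw [Phi_def, hrr, Real.rpow_zero]
      rw [hΦν, hΦν'] at *
      rw [hBdef, hrr]
      have hc7ψ : c7 * psi k ν ≤ c7 * (1 + Real.log ν) :=
        mul_le_mul_of_nonneg_left hψ hc70.le
      have : (0:ℝ) ≤ Real.log C2 + 2*c + c7*(1/(0:ℝ)+1) + 1 := by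
        simp only [div_zero, zero_add]
        nlinarith
      simp only [div_zero, zero_add] at *
      nlinarith
    · -- 2 ≤ k
      have hrhalf : 1/2 ≤ rr k := rr_half hk2
      have hrpos : 0 < rr k := by linarith
      have hψ : psi k ν ≤ Phi k ν * (1/rr k) := by
        rw [mul_one_div, le_div_iff₀ hrpos]
        have := psi_le_phi hk2 ν
        linarith
      have hc7ψ : c7 * psi k ν ≤ c7 * (1/rr k) * Phi k ν := by
        have := mul_le_mul_of_nonneg_left hψ hc70.le
        nlinarith
      have hBge : 2*c + c7 * (1/rr k) ≤ B := by
        rw [hBdef]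
        nlinarith
      have e1 : (2*c + c7 * (1/rr k)) * Phi k ν ≤ B * Phi k ν :=
        mul_le_mul_of_nonneg_right hBge (by linarith)
      have e2 : Real.log C2 ≤ B * (1 + Real.log ν) := by
        have hB0 : Real.log C2 ≤ B := by rw [hBdef]; nlinarith
        have hL1 : (1:ℝ) ≤ 1 + Real.log ν := by linarith
        calc Real.log C2 = Real.log C2 * 1 := by ring
          _ ≤ B * (1 + Real.log ν) :=
              mul_le_mul hB0 hL1 zero_le_one (by nlinarith)
      calc Real.log C2 + c * Phi k (ν+1) + c7 * psi k ν
          ≤ Real.log C2 + 2*c*Phi k ν + c7*(1/rr k)*Phi k ν := by linarith [hcΦ, hc7ψ]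
        _ = Real.log C2 + (2*c + c7*(1/rr k))*Phi k ν := by ring
        _ ≤ B*(1 + Real.log ν) + B*Phi k ν := by linarith [e1, e2]
        _ = B * (Phi k ν + (1 + Real.log ν)) := by ring
  calc ‖p ν‖ ≤ C2 * ρ^ν * Real.exp (c * Phi k (ν+1) + c7 * psi k ν) := h
    _ = ρ^ν * Real.exp (Real.log C2 + (c * Phi k (ν+1) + c7 * psi k ν)) := by
        rw [Real.exp_add (Real.log C2) (c * Phi k (ν+1) + c7 * psi k ν),
          Real.exp_log (show (0:ℝ) < C2 by linarith)]
        ring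
    _ ≤ ρ^ν * Real.exp (B * ((ν:ℝ) ^ (rr k) + Real.log (Real.exp 1 * ν))) := by
        apply mul_le_mul_of_nonneg_left _ (pow_nonneg hρ.le ν)
        apply Real.exp_le_exp.mpr
        have hPd : Phi k ν = (ν:ℝ)^(rr k) := rfl
        rw [← hPd]
        linarith

end Core

section PartB

variable {n : ℕ} (Asim : Matrix (Fin n) (Fin n) ℂ)

lemma charpoly_mulVecLin :
    (LinearMap.charpoly (Matrix.mulVecLin Asim)) = Asim.charpoly := by
  rw [← LinearMap.charpoly_toMatrix (Matrix.mulVecLin Asim) (Pi.basisFun ℂ (Fin n))]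
  congr 1
  rw [LinearMap.toMatrix_eq_toMatrix', ← Matrix.toLin'_apply' Asim,
    LinearMap.toMatrix'_toLin']

lemma eig_isRoot (μ : ℂ) (h : Module.End.HasEigenvalue (Matrix.mulVecLin Asim) μ) :
    Asim.charpoly.IsRoot μ := by
  have h1 : (minpoly ℂ (Matrix.mulVecLin Asim)).IsRoot μ :=
    Module.End.hasEigenvalue_iff_isRoot.mp h
  have h2 : minpoly ℂ (Matrix.mulVecLin Asim) ∣ LinearMap.charpoly (Matrix.mulVecLin Asim) :=
    LinearMap.minpoly_dvd_charpoly _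
  rw [charpoly_mulVecLin] at h2
  exact h1.dvd h2

lemma mulVecLin_pow (M : Matrix (Fin n) (Fin n) ℂ) (j : ℕ) :
    Matrix.mulVecLin (M ^ j) = (Matrix.mulVecLin M) ^ j := by
  induction j with
  | zero => simp [Matrix.mulVecLin_one]; rfl
  | succ j ih => rw [pow_succ, pow_succ, Matrix.mulVecLin_mul, ih]; rfl

lemma mulVecLin_sub_smul (μ : ℂ) :
    Matrix.mulVecLin (Asim - μ • 1) =
      Matrix.mulVecLin Asim - μ • (1 : Module.End ℂ (Fin n → ℂ)) := by
  apply LinearMap.ext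
  intro x
  rw [Matrix.mulVecLin_apply, Matrix.sub_mulVec, Matrix.smul_mulVec,
    Matrix.one_mulVec]
  simp [LinearMap.sub_apply, LinearMap.smul_apply, Matrix.mulVecLin_apply,
    Module.End.one_apply]

lemma ker_pow_le_of_stab {g : Module.End ℂ (Fin n → ℂ)} {k : ℕ}
    (h : LinearMap.ker (g ^ k) = LinearMap.ker (g ^ (k+1))) (j : ℕ) :
    LinearMap.ker (g ^ j) ≤ LinearMap.ker (g ^ k) := by
  rcases le_or_gt j k with hjk | hkj
  · intro x hx
    rw [LinearMap.mem_ker] at hx ⊢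
    have : g ^ k = g ^ (k - j) * g ^ j := by rw [← pow_add]; congr 1; omega
    rw [this, Module.End.mul_apply, hx, map_zero]
  · have := Module.End.ker_pow_constant h (j - k)
    have h2 : k + (j - k) = j := by omega
    rw [h2] at this
    rw [← this]


lemma apply_pow_norm_le {w : Module.End ℂ (Fin n → ℂ)} (i : ℕ) (y : Fin n → ℂ) :
    ‖(w ^ i) y‖ ≤ ‖LinearMap.toContinuousLinearMap w‖ ^ i * ‖y‖ := by
  induction i generalizing y with
  | zero => simp
  | succ i ih =>
      rw [pow_succ, Module.End.mul_apply]
      calc ‖(w ^ i) (w y)‖ ≤ ‖LinearMap.toContinuousLinearMap w‖ ^ i * ‖w y‖ := ih (w y)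
        _ ≤ ‖LinearMap.toContinuousLinearMap w‖ ^ i
            * (‖LinearMap.toContinuousLinearMap w‖ * ‖y‖) := by
            apply mul_le_mul_of_nonneg_left _ (by positivity)
            exact (LinearMap.toContinuousLinearMap w).le_opNorm y
        _ = ‖LinearMap.toContinuousLinearMap w‖ ^ (i+1) * ‖y‖ := by ring

set_option maxHeartbeats 2000000 in
lemma power_bound {k : ℕ} {ρ : ℝ} (hρ : 0 < ρ)
    (hroots : ∀ μ : ℂ, Asim.charpoly.IsRoot μ → ‖μ‖ ≤ ρ)
    (hk : 0 < k)
    (hstab : ∀ μ : ℂ, Asim.charpoly.IsRoot μ →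
      LinearMap.ker (Matrix.mulVecLin ((Asim - μ • 1) ^ k)) =
        LinearMap.ker (Matrix.mulVecLin ((Asim - μ • 1) ^ (k + 1)))) :
    ∃ C2 : ℝ, 1 ≤ C2 ∧ ∀ m : ℕ,
      ‖(T Asim) ^ m‖ ≤ C2 * ((m:ℝ)+1) ^ ((k:ℝ)-1) * ρ ^ m := by
  classical
  set f : Module.End ℂ (Fin n → ℂ) := Matrix.mulVecLin Asim with hfdef
  set R : Finset ℂ := Asim.charpoly.roots.toFinset with hRdef
  have hchar0 : Asim.charpoly ≠ 0 := (Asim.charpoly_monic).ne_zero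
  have hmemR : ∀ μ : ℂ, μ ∈ R ↔ Asim.charpoly.IsRoot μ := by
    intro μ
    rw [hRdef, Multiset.mem_toFinset, Polynomial.mem_roots hchar0]
  set q : ℂ → Submodule ℂ (Fin n → ℂ) := fun μ => LinearMap.ker ((f - μ • 1) ^ k) with hqdef
  have hqle : ∀ μ, q μ ≤ f.maxGenEigenspace μ := by
    intro μ x hx
    rw [Module.End.mem_maxGenEigenspace]
    exact ⟨k, hx⟩
  have hmaxle : ∀ μ : ℂ, μ ∈ R → f.maxGenEigenspace μ ≤ q μ := by
    intro μ hμ x hx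
    rw [Module.End.mem_maxGenEigenspace] at hx
    obtain ⟨j, hj⟩ := hx
    have h := hstab μ ((hmemR μ).mp hμ)
    rw [mulVecLin_pow, mulVecLin_pow, mulVecLin_sub_smul] at h
    exact ker_pow_le_of_stab h j hj
  have htop : (⨆ μ : R, q μ.1) = ⊤ := by
    apply le_antisymm le_top
    rw [← Module.End.iSup_maxGenEigenspace_eq_top f]
    apply iSup_le
    intro μ
    by_cases hμ : μ ∈ R
    · exact le_trans (hmaxle μ hμ) (le_iSup (fun ν : R => q ν.1) ⟨μ, hμ⟩)
    · intro x hx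
      rw [Module.End.mem_maxGenEigenspace] at hx
      obtain ⟨j, hj⟩ := hx
      by_cases hx0 : x = 0
      · rw [hx0]; exact Submodule.zero_mem _
      · exfalso
        apply hμ
        rw [hmemR]
        apply eig_isRoot Asim μ
        apply Module.End.hasEigenvalue_of_hasGenEigenvalue (k := j)
        rw [Module.End.hasGenEigenvalue_iff]
        apply Submodule.ne_bot_iff _ |>.mpr
        refine ⟨x, ?_, hx0⟩
        rw [Module.End.genEigenspace_nat]
        exact hj
  have hindep : iSupIndep (fun μ : R => q μ.1) :=
    ((f.independent_maxGenEigenspace).mono hqle).comp Subtype.val_injective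
  -- the summation linear map
  set Φmap : (∀ μ : R, q μ.1) →ₗ[ℂ] (Fin n → ℂ) :=
    { toFun := fun v => ∑ μ : R, (v μ : Fin n → ℂ),
      map_add' := fun v w => by
        simp only [Submodule.coe_add, Pi.add_apply]
        rw [← Finset.sum_add_distrib],
      map_smul' := fun c v => by
        simp only [Submodule.coe_smul, Pi.smul_apply, RingHom.id_apply]
        rw [← Finset.smul_sum] } with hΦdef
  have hΦapply : ∀ v, Φmap v = ∑ μ : R, (v μ : Fin n → ℂ) := fun v => rfl
  have hinj : Function.Injective Φmap := by
    rw [injective_iff_map_eq_zero]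
    intro v hv
    rw [hΦapply] at hv
    funext μ0
    have hdisj := hindep μ0
    have heq : (v μ0 : Fin n → ℂ) = -∑ μ ∈ Finset.univ.erase μ0, (v μ : Fin n → ℂ) := by
      have h2 := Finset.add_sum_erase Finset.univ (fun μ : R => (v μ : Fin n → ℂ))
        (Finset.mem_univ μ0)
      rw [hv] at h2
      linear_combination h2
    have hmem : (v μ0 : Fin n → ℂ) ∈ ⨆ (j : R) (_ : j ≠ μ0), q j.1 := by
      rw [heq]
      apply Submodule.neg_mem
      apply Submodule.sum_mem
      intro μ hμ
      exact Submodule.mem_iSup_of_mem μ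
        (Submodule.mem_iSup_of_mem (Finset.ne_of_mem_erase hμ) (v μ).2)
    have h0 : (v μ0 : Fin n → ℂ) = 0 :=
      Submodule.disjoint_def.mp hdisj _ (v μ0).2 hmem
    exact Subtype.ext h0
  have hsurj : Function.Surjective Φmap := by
    rw [← LinearMap.range_eq_top, eq_top_iff, ← htop]
    apply iSup_le
    intro μ x hx
    refine ⟨Pi.single μ ⟨x, hx⟩, ?_⟩
    rw [hΦapply]
    rw [Finset.sum_eq_single μ]
    · rw [Pi.single_eq_same]
    · intro μ' _ hne
      rw [Pi.single_eq_of_ne hne]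
      rfl
    · intro h
      exact absurd (Finset.mem_univ μ) h
  set e : (∀ μ : R, q μ.1) ≃ₗ[ℂ] (Fin n → ℂ) :=
    LinearEquiv.ofBijective Φmap ⟨hinj, hsurj⟩ with hedef
  set π : R → ((Fin n → ℂ) →ₗ[ℂ] (Fin n → ℂ)) :=
    fun μ => (q μ.1).subtype ∘ₗ
      ((LinearMap.proj μ : (∀ ν : R, ↥(q ν.1)) →ₗ[ℂ] ↥(q μ.1)) ∘ₗ e.symm.toLinearMap)
    with hπdef
  have hπmem : ∀ (μ : R) (x : Fin n → ℂ), (π μ) x ∈ q μ.1 := by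
    intro μ x
    exact ((e.symm x) μ).2
  have hdecomp : ∀ x : Fin n → ℂ, ∑ μ : R, (π μ) x = x := by
    intro x
    have h1 : Φmap (e.symm x) = x := e.apply_symm_apply x
    calc ∑ μ : R, (π μ) x = Φmap (e.symm x) := by rw [hΦapply]; rfl
      _ = x := h1
  -- constants
  set Kc : R → ℝ := fun μ => ‖LinearMap.toContinuousLinearMap (π μ)‖ with hKcdef
  set g : R → ℝ := fun μ =>
    ‖LinearMap.toContinuousLinearMap (f - μ.1 • (1 : Module.End ℂ (Fin n → ℂ)))‖ with hgdef
  set P : ℝ := max 1 ρ⁻¹ with hPdef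
  have hP1 : 1 ≤ P := le_max_left _ _
  set D : R → ℝ := fun μ => (max 1 (g μ) * P)^k with hDdef
  have hD1 : ∀ μ, 1 ≤ D μ := by
    intro μ
    rw [hDdef]
    apply one_le_pow₀
    have h1 : (1:ℝ) ≤ max 1 (g μ) := le_max_left _ _
    nlinarith
  set Cbig : ℝ := ∑ μ : R, (k:ℝ) * D μ * Kc μ with hCbigdef
  -- per-subspace power bound
  have hsub : ∀ (μ : R) (y : Fin n → ℂ), y ∈ q μ.1 → ∀ m : ℕ,
      ‖(f ^ m) y‖ ≤ (k:ℝ) * D μ * (((m:ℝ)+1) ^ ((k:ℝ)-1) * ρ^m) * ‖y‖ := by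
    intro μ y hy m
    set u : Module.End ℂ (Fin n → ℂ) := f - μ.1 • 1 with hudef
    have hky : (u ^ k) y = 0 := hy
    have hcomm : Commute u (μ.1 • (1 : Module.End ℂ (Fin n → ℂ))) :=
      (Commute.one_right u).smul_right μ.1
    have hfe : f = u + μ.1 • 1 := by rw [hudef]; abel
    have happ : (f ^ m) y = ∑ i ∈ Finset.range (m+1),
        ((m.choose i : ℂ) * μ.1 ^ (m-i)) • ((u ^ i) y) := by
      rw [hfe, hcomm.add_pow m, LinearMap.sum_apply]
      apply Finset.sum_congr rfl
      intro i _
      have h1 : (μ.1 • (1 : Module.End ℂ (Fin n → ℂ))) ^ (m-i) = μ.1 ^ (m-i) • 1 := by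
        rw [_root_.smul_pow, one_pow]
      rw [Module.End.mul_apply, Module.End.mul_apply, h1, Module.End.natCast_apply,
        LinearMap.smul_apply, Module.End.one_apply, ← Nat.cast_smul_eq_nsmul ℂ,
        smul_smul, _root_.map_smul, mul_comm (μ.1 ^ (m-i)) ((m.choose i : ℂ))]
    have hzero : ∀ i : ℕ, k ≤ i → (u ^ i) y = 0 := by
      intro i hi
      have : u ^ i = u ^ (i-k) * u ^ k := by rw [← pow_add]; congr 1; omega
      rw [this, Module.End.mul_apply, hky, map_zero]
    have hterm : ∀ i ∈ Finset.range (m+1),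
        ‖((m.choose i : ℂ) * μ.1 ^ (m-i)) • ((u ^ i) y)‖ ≤
          (if i < k then D μ * (((m:ℝ)+1) ^ ((k:ℝ)-1) * ρ^m) * ‖y‖ else 0) := by
      intro i hi
      rw [Finset.mem_range] at hi
      by_cases hik : i < k
      · rw [if_pos hik, norm_smul]
        have hn1 : ‖(m.choose i : ℂ) * μ.1 ^ (m-i)‖
            ≤ (m.choose i : ℝ) * ‖μ.1‖ ^ (m-i) := by
          apply le_of_eq
          rw [norm_mul, norm_pow, Complex.norm_natCast]
        have hchoose : (m.choose i : ℝ) ≤ ((m:ℝ)+1) ^ ((k:ℝ)-1) := by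
          have h1 : (m.choose i : ℝ) ≤ ((m:ℝ))^i := by
            exact_mod_cast Nat.choose_le_pow m i
          have h2 : ((m:ℝ))^i ≤ ((m:ℝ)+1)^i := by
            apply pow_le_pow_left₀ (Nat.cast_nonneg m)
            linarith
          have h3 : ((m:ℝ)+1)^i = ((m:ℝ)+1) ^ ((i:ℕ):ℝ) := by
            rw [Real.rpow_natCast]
          have h4 : ((m:ℝ)+1) ^ ((i:ℕ):ℝ) ≤ ((m:ℝ)+1) ^ ((k:ℝ)-1) := by
            apply Real.rpow_le_rpow_of_exponent_le
            · have : (0:ℝ) ≤ (m:ℝ) := Nat.cast_nonneg m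
              linarith
            · have : (i:ℝ) + 1 ≤ (k:ℝ) := by exact_mod_cast hik
              linarith
          linarith [h1, h2, h3.le, h3.ge]
        have habs : ‖μ.1‖ ^ (m-i) ≤ ρ^m * P^k := by
          have h1 : ‖μ.1‖ ^ (m-i) ≤ ρ^(m-i) := by
            apply pow_le_pow_left₀ (norm_nonneg _)
            exact hroots μ.1 ((hmemR μ.1).mp μ.2)
          have hc : ρ^(m-i) * ρ^i = ρ^m := by rw [← pow_add]; congr 1; omega
          have h2 : ρ^(m-i) = ρ^m * (ρ^i)⁻¹ :=
            (eq_mul_inv_iff_mul_eq₀ (by positivity)).mpr hc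
          have ha : (ρ^i)⁻¹ ≤ P^k := by
            rw [← inv_pow]
            calc (ρ⁻¹)^i ≤ P^i :=
                  pow_le_pow_left₀ (by positivity) (le_max_right 1 ρ⁻¹) i
              _ ≤ P^k := pow_le_pow_right₀ hP1 (by omega)
          calc ‖μ.1‖ ^ (m-i) ≤ ρ^(m-i) := h1
            _ = ρ^m * (ρ^i)⁻¹ := h2
            _ ≤ ρ^m * P^k := mul_le_mul_of_nonneg_left ha (by positivity)
        have hgu : ‖LinearMap.toContinuousLinearMap u‖ = g μ := rfl
        have hn2 : ‖(u ^ i) y‖ ≤ (max 1 (g μ))^k * ‖y‖ := by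
          calc ‖(u ^ i) y‖ ≤ ‖LinearMap.toContinuousLinearMap u‖ ^ i * ‖y‖ :=
                apply_pow_norm_le i y
            _ = (g μ)^i * ‖y‖ := by rw [hgu]
            _ ≤ (max 1 (g μ))^k * ‖y‖ := by
                apply mul_le_mul_of_nonneg_right _ (norm_nonneg y)
                calc (g μ)^i ≤ (max 1 (g μ))^i :=
                      pow_le_pow_left₀ (norm_nonneg _) (le_max_right 1 (g μ)) i
                  _ ≤ (max 1 (g μ))^k := pow_le_pow_right₀ (le_max_left _ _) (by omega)
        have hgμ0 : (0:ℝ) ≤ max 1 (g μ) := le_trans zero_le_one (le_max_left _ _)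
        calc ‖(m.choose i : ℂ) * μ.1 ^ (m-i)‖ * ‖(u ^ i) y‖
            ≤ ((m.choose i : ℝ) * ‖μ.1‖ ^ (m-i)) * ((max 1 (g μ))^k * ‖y‖) :=
              mul_le_mul hn1 hn2 (norm_nonneg _) (by positivity)
          _ ≤ (((m:ℝ)+1) ^ ((k:ℝ)-1) * (ρ^m * P^k)) * ((max 1 (g μ))^k * ‖y‖) := by
              apply mul_le_mul_of_nonneg_right _ (by positivity)
              apply mul_le_mul hchoose habs (by positivity) (by positivity)
          _ = D μ * (((m:ℝ)+1) ^ ((k:ℝ)-1) * ρ^m) * ‖y‖ := by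
              have hDμ : D μ = (max 1 (g μ))^k * P^k := mul_pow _ _ _
              rw [hDμ]
              ring
      · rw [if_neg hik, hzero i (by omega), smul_zero, norm_zero]
    have hZ0 : (0:ℝ) ≤ D μ * (((m:ℝ)+1) ^ ((k:ℝ)-1) * ρ^m) * ‖y‖ := by
      have := hD1 μ
      positivity
    calc ‖(f ^ m) y‖
        = ‖∑ i ∈ Finset.range (m+1), ((m.choose i : ℂ) * μ.1 ^ (m-i)) • ((u ^ i) y)‖ := by
          rw [happ]
      _ ≤ ∑ i ∈ Finset.range (m+1), ‖((m.choose i : ℂ) * μ.1 ^ (m-i)) • ((u ^ i) y)‖ :=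
          norm_sum_le _ _
      _ ≤ ∑ i ∈ Finset.range (m+1),
          (if i < k then D μ * (((m:ℝ)+1) ^ ((k:ℝ)-1) * ρ^m) * ‖y‖ else 0) := by
          apply Finset.sum_le_sum
          intro i hi
          have h := hterm i hi
          calc ‖((m.choose i : ℂ) * μ.1 ^ (m-i)) • ((u ^ i) y)‖
              = ‖(m.choose i : ℂ) * μ.1 ^ (m-i)‖ * ‖(u ^ i) y‖ := norm_smul _ _
            _ ≤ _ := by
                rw [← norm_smul]
                exact h
      _ = ((Finset.range (m+1)).filter (· < k)).card •
          (D μ * (((m:ℝ)+1) ^ ((k:ℝ)-1) * ρ^m) * ‖y‖) := by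
          rw [← Finset.sum_filter, Finset.sum_const]
      _ ≤ (k:ℝ) * (D μ * (((m:ℝ)+1) ^ ((k:ℝ)-1) * ρ^m) * ‖y‖) := by
          rw [nsmul_eq_mul]
          apply mul_le_mul_of_nonneg_right _ hZ0
          have hsubset : (Finset.range (m+1)).filter (· < k) ⊆ Finset.range k := by
            intro i hi
            rw [Finset.mem_filter] at hi
            rw [Finset.mem_range]
            exact hi.2
          have := Finset.card_le_card hsubset
          rw [Finset.card_range] at this
          exact_mod_cast this
      _ = (k:ℝ) * D μ * (((m:ℝ)+1) ^ ((k:ℝ)-1) * ρ^m) * ‖y‖ := by ring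
  -- global bound
  have hDKnn : ∀ μ : R, (0:ℝ) ≤ (k:ℝ) * D μ * Kc μ := by
    intro μ
    have h1 := hD1 μ
    have h2 : (0:ℝ) ≤ Kc μ := norm_nonneg _
    positivity
  have hglob : ∀ (m : ℕ) (x : Fin n → ℂ),
      ‖(f ^ m) x‖ ≤ Cbig * (((m:ℝ)+1) ^ ((k:ℝ)-1) * ρ^m) * ‖x‖ := by
    intro m x
    conv_lhs => rw [← hdecomp x]
    rw [map_sum]
    calc ‖∑ μ : R, (f^m) ((π μ) x)‖ ≤ ∑ μ : R, ‖(f^m) ((π μ) x)‖ := norm_sum_le _ _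
      _ ≤ ∑ μ : R, (k:ℝ) * D μ * (((m:ℝ)+1) ^ ((k:ℝ)-1) * ρ^m) * (Kc μ * ‖x‖) := by
          apply Finset.sum_le_sum
          intro μ _
          have hb := hsub μ ((π μ) x) (hπmem μ x) m
          have hπx : ‖(π μ) x‖ ≤ Kc μ * ‖x‖ :=
            (LinearMap.toContinuousLinearMap (π μ)).le_opNorm x
          have h1 := hD1 μ
          calc ‖(f^m) ((π μ) x)‖
              ≤ (k:ℝ) * D μ * (((m:ℝ)+1) ^ ((k:ℝ)-1) * ρ^m) * ‖(π μ) x‖ := hb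
            _ ≤ (k:ℝ) * D μ * (((m:ℝ)+1) ^ ((k:ℝ)-1) * ρ^m) * (Kc μ * ‖x‖) := by
                apply mul_le_mul_of_nonneg_left hπx
                positivity
      _ = Cbig * (((m:ℝ)+1) ^ ((k:ℝ)-1) * ρ^m) * ‖x‖ := by
          rw [hCbigdef, Finset.sum_mul, Finset.sum_mul]
          apply Finset.sum_congr rfl
          intro μ _
          ring
  refine ⟨max 1 Cbig, le_max_left _ _, ?_⟩
  intro m
  have hmax0 : (0:ℝ) ≤ max 1 Cbig := le_trans zero_le_one (le_max_left _ _)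
  have hXnn : (0:ℝ) ≤ ((m:ℝ)+1) ^ ((k:ℝ)-1) := Real.rpow_nonneg (by positivity) _
  apply ContinuousLinearMap.opNorm_le_bound _ (by positivity)
  intro x
  have h := hglob m x
  have hTf : ((T Asim)^m) x = (f^m) x := T_pow_apply Asim m x
  rw [hTf]
  calc ‖(f^m) x‖ ≤ Cbig * (((m:ℝ)+1) ^ ((k:ℝ)-1) * ρ^m) * ‖x‖ := h
    _ ≤ max 1 Cbig * ((m:ℝ)+1) ^ ((k:ℝ)-1) * ρ^m * ‖x‖ := by
        apply mul_le_mul_of_nonneg_right _ (norm_nonneg x)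
        have hCb : Cbig ≤ max 1 Cbig := le_max_right _ _
        have : Cbig * (((m:ℝ)+1) ^ ((k:ℝ)-1) * ρ^m)
            ≤ max 1 Cbig * (((m:ℝ)+1) ^ ((k:ℝ)-1) * ρ^m) :=
          mul_le_mul_of_nonneg_right hCb (by positivity)
        calc Cbig * (((m:ℝ)+1) ^ ((k:ℝ)-1) * ρ^m)
            ≤ max 1 Cbig * (((m:ℝ)+1) ^ ((k:ℝ)-1) * ρ^m) := this
          _ = max 1 Cbig * ((m:ℝ)+1) ^ ((k:ℝ)-1) * ρ^m := by ring

end PartB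


end MPGB

open MPGB in
/-- Growth estimate for products of matrices converging to `A∼`
at rate `O(1/(ν+1))`: `h^∼(A(ν−1)⋯A(0)) ≤ ρ₁^ν · exp(B(ν^{1−1/k} + ln(eν)))`. -/
theorem matrix_product_growth_bound
    (n k : ℕ) (Asim : Matrix (Fin n) (Fin n) ℂ) (ρ₁ : ℝ)
    (hρ₁ : specRad Asim = ρ₁) (hρpos : 0 < ρ₁)
    (hk : IsMaxJordanSize Asim k)
    (A : ℕ → Matrix (Fin n) (Fin n) ℂ) (C₁ : ℝ) (hC₁ : 0 < C₁)
    (hA : ∀ ν : ℕ, opNormWrt hNorm (A ν - Asim) ≤ C₁ / ((ν : ℝ) + 1)) :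
    ∃ B : ℝ, 0 < B ∧ ∀ ν : ℕ, 1 ≤ ν →
      opNormWrt hNorm (((List.range ν).reverse.map A).prod) ≤
        ρ₁ ^ ν * Real.exp (B * ((ν : ℝ) ^ (1 - 1 / (k : ℝ)) +
          Real.log (Real.exp 1 * (ν : ℝ)))) := by
  classical
  obtain ⟨⟨hkpos, hstab⟩, -⟩ := hk
  have hroots : ∀ μ : ℂ, Asim.charpoly.IsRoot μ → ‖μ‖ ≤ ρ₁ := by
    intro μ hμ
    rw [← hρ₁]
    show ‖μ‖ ≤ sSup _
    apply le_csSup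
    · have hfin : {x : ℂ | Asim.charpoly.IsRoot x}.Finite :=
        Polynomial.finite_setOf_isRoot (Asim.charpoly_monic.ne_zero)
      have hset : {r : ℝ | ∃ μ : ℂ, Asim.charpoly.IsRoot μ ∧ r = ‖μ‖}
          = (fun z : ℂ => ‖z‖) '' {x : ℂ | Asim.charpoly.IsRoot x} := by
        ext r
        constructor
        · rintro ⟨μ', h1, rfl⟩; exact ⟨μ', h1, rfl⟩
        · rintro ⟨μ', h1, rfl⟩; exact ⟨μ', h1, rfl⟩
      rw [hset]
      exact (hfin.image _).bddAbove
    · exact ⟨μ, hμ, rfl⟩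
  obtain ⟨C2, hC2, hpow⟩ := power_bound Asim hρpos hroots hkpos hstab
  set a := T Asim with hadef
  set E : ℕ → _ := fun ν => T (A ν - Asim) with hEdef
  have hEnorm : ∀ ν : ℕ, ‖E ν‖ ≤ C₁ / ((ν:ℝ)+1) := by
    intro ν
    have : E ν = T (A ν - Asim) := rfl
    rw [this, ← opNormWrt_eq]
    exact hA ν
  set p : ℕ → _ := fun ν => T (((List.range ν).reverse.map A).prod) with hpdef
  have hp0 : p 0 = 1 := by
    have : p 0 = T (((List.range 0).reverse.map A).prod) := rfl
    rw [this]
    simp only [List.range_zero, List.reverse_nil, List.map_nil, List.prod_nil]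
    exact T_one
  have hps : ∀ ν, p (ν+1) = (a + E ν) * p ν := by
    intro ν
    have hlist : ((List.range (ν+1)).reverse.map A).prod
        = A ν * ((List.range ν).reverse.map A).prod := by
      rw [List.range_succ]
      simp
    have h1 : p (ν+1) = T (((List.range (ν+1)).reverse.map A).prod) := rfl
    have h2 : p ν = T (((List.range ν).reverse.map A).prod) := rfl
    rw [h1, h2, hlist, T_mul]
    congr 1
    have h3 : a + E ν = T Asim + T (A ν - Asim) := rfl
    rw [h3, ← T_add]
    congr 1
    abel
  have hk1 : 1 ≤ k := hkpos
  obtain ⟨B, hB, hbound⟩ := core hk1 hρpos hC₁ hC2 a E hpow hEnorm p hp0 hps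
  refine ⟨B, hB, ?_⟩
  intro ν hν
  rw [opNormWrt_eq]
  exact hbound ν hν
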